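/- For every integer N ≥ 2 and real P > 0, the function φ ↦ N/(2(N-1))·log(1 + Pφ(N-φ)) − (1/2)·log(1 + NPφ) is strictly decreasing on the interval [1, N]. -/

import Mathlib

theorem stmt_3 (N : ℕ) (hN : 2 ≤ N) (P : ℝ) (hP : 0 < P) :
    StrictAntiOn
      (fun φ : ℝ =>
        (N : ℝ) / (2 * ((N : ℝ) - 1)) * Real.log (1 + P * φ * ((N : ℝ) - φ)) -
          (1 / 2) * Real.log (1 + (N : ℝ) * P * φ))
      (Set.Icc 1 (N : ℝ)) := by
  have hN1 : (2:ℝ) ≤ (N:ℝ) := by exact_mod_cast hN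
  have hNpos : (0:ℝ) < (N:ℝ) := by linarith
  have hN1' : (0:ℝ) < (N:ℝ) - 1 := by linarith
  -- positivity of log arguments on Icc
  have hA : ∀ x ∈ Set.Icc (1:ℝ) (N:ℝ), 0 < 1 + P * x * ((N:ℝ) - x) := by
    intro x hx
    obtain ⟨hx1, hx2⟩ := hx
    nlinarith [mul_nonneg (mul_nonneg hP.le (by linarith : (0:ℝ) ≤ x)) (by linarith : (0:ℝ) ≤ (N:ℝ) - x)]
  have hB : ∀ x ∈ Set.Icc (1:ℝ) (N:ℝ), 0 < 1 + (N:ℝ) * P * x := by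
    intro x hx
    nlinarith [hx.1, mul_pos (mul_pos hNpos hP) (lt_of_lt_of_le one_pos hx.1)]
  apply strictAntiOn_of_deriv_neg (convex_Icc _ _)
  · apply ContinuousOn.sub
    · apply ContinuousOn.mul continuousOn_const
      apply ContinuousOn.log
      · fun_prop
      · intro x hx; exact (hA x hx).ne'
    · apply ContinuousOn.mul continuousOn_const
      apply ContinuousOn.log
      · fun_prop
      · intro x hx; exact (hB x hx).ne'
  · intro x hx
    rw [interior_Icc] at hx
    obtain ⟨hx1, hx2⟩ := hx
    have hxIcc : x ∈ Set.Icc (1:ℝ) (N:ℝ) := ⟨hx1.le, hx2.le⟩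
    have hAx := hA x hxIcc
    have hBx := hB x hxIcc
    have h1 : HasDerivAt (fun y : ℝ => 1 + P * y * ((N:ℝ) - y)) (P * ((N:ℝ) - 2 * x)) x := by
      have h := (((hasDerivAt_id x).const_mul P).mul
        ((hasDerivAt_const x (N:ℝ)).sub (hasDerivAt_id x))).const_add 1
      refine h.congr_deriv ?_
      simp [id]
      ring
    have h2 : HasDerivAt (fun y : ℝ => 1 + (N:ℝ) * P * y) ((N:ℝ) * P) x := by
      have h := ((hasDerivAt_id x).const_mul ((N:ℝ) * P)).const_add 1
      refine h.congr_deriv ?_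
      ring
    have hf : HasDerivAt
        (fun φ : ℝ =>
          (N : ℝ) / (2 * ((N : ℝ) - 1)) * Real.log (1 + P * φ * ((N : ℝ) - φ)) -
            (1 / 2) * Real.log (1 + (N : ℝ) * P * φ))
        ((N : ℝ) / (2 * ((N : ℝ) - 1)) * (P * ((N:ℝ) - 2 * x) / (1 + P * x * ((N:ℝ) - x))) -
          (1 / 2) * ((N:ℝ) * P / (1 + (N:ℝ) * P * x))) x := by
      exact ((h1.log hAx.ne').const_mul _).sub ((h2.log hBx.ne').const_mul _)
    rw [hf.deriv]
    rw [sub_neg]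
    have key : ((N:ℝ) - 2 * x) * (1 + (N:ℝ) * P * x) < ((N:ℝ) - 1) * (1 + P * x * ((N:ℝ) - x)) := by
      have h3 : (0:ℝ) < ((N:ℝ) + 1) * x - (N:ℝ) := by nlinarith
      nlinarith [mul_pos (mul_pos hP (by linarith : (0:ℝ) < x)) h3]
    have key' : (0:ℝ) < (↑N - 1) * (1 + P * x * (↑N - x)) - (↑N - 2 * x) * (1 + ↑N * P * x) :=
      sub_pos.mpr key
    have e1 : (N : ℝ) / (2 * ((N : ℝ) - 1)) * (P * ((N:ℝ) - 2 * x) / (1 + P * x * ((N:ℝ) - x)))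
        = ((N:ℝ) * (P * ((N:ℝ) - 2 * x))) / ((2 * ((N:ℝ) - 1)) * (1 + P * x * ((N:ℝ) - x))) :=
      div_mul_div_comm _ _ _ _
    have e2 : (1 / 2 : ℝ) * ((N:ℝ) * P / (1 + (N:ℝ) * P * x))
        = (1 * ((N:ℝ) * P)) / (2 * (1 + (N:ℝ) * P * x)) := div_mul_div_comm _ _ _ _
    rw [e1, e2, div_lt_div_iff₀ (by positivity) (by positivity)]
    nlinarith [mul_pos (mul_pos hNpos hP) key']
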